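/- In the quantum exterior algebra Λ, the unital subalgebra Λ_e generated by {e_γ : γ ∈ Δ⁺} is 8-dimensional, with ℂ-basis the monomials e_{γ₁}⋯e_{γ_a} for strictly increasing sequences γ₁ < ⋯ < γ_a in Δ⁺ (including the empty product); likewise the unital subalgebra Λ_f generated by {f_γ : γ ∈ Δ⁺} is 8-dimensional with basis the analogous f-monomials. (This is the statement that the anti-holomorphic and holomorphic subcomplexes Ω^{(0,•)}_q(F₃) and Ω^{(•,0)}_q(F₃) have classical dimension.) -/

import Mathlib

noncomputable section

namespace QFlagExt

/-- The positive roots of `sl₃`: `a1 = α₁`, `a2 = α₂`, `a12 = α₁+α₂`. -/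
inductive PosRoot : Type
  | a1 | a2 | a12
deriving DecidableEq

instance instFintypePosRoot : Fintype PosRoot :=
  ⟨{PosRoot.a1, PosRoot.a2, PosRoot.a12}, fun x => by cases x <;> simp⟩

open PosRoot

/-- Position in the convex order `α₂ < α₁+α₂ < α₁`. -/
def pos : PosRoot → ℕ
  | a2 => 0
  | a12 => 1
  | a1 => 2

/-- The symmetric bilinear form `(·,·)` on the roots of `sl₃`. -/
def ip : PosRoot → PosRoot → ℤ
  | a1, a1 => 2
  | a2, a2 => 2
  | a12, a12 => 2
  | a1, a2 => -1
  | a2, a1 => -1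
  | a1, a12 => 1
  | a12, a1 => 1
  | a2, a12 => 1
  | a12, a2 => 1

/-- Generators of the quantum exterior algebra: `e γ` and `f γ` for `γ ∈ Δ⁺`. -/
inductive LGen : Type
  | e : PosRoot → LGen
  | f : PosRoot → LGen
deriving DecidableEq, Fintype

open LGen

/-- The generators viewed inside the free algebra. -/
def ce (x : LGen) : FreeAlgebra ℂ LGen := FreeAlgebra.ι ℂ x

/-- The defining relations of the quantum exterior algebra `Λ` of the full quantum
flag manifold of `O_q(SU₃)`. -/
inductive lrel (q : ℝ) : FreeAlgebra ℂ LGen → FreeAlgebra ℂ LGen → Prop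
  | ee (β γ : PosRoot) (h : pos β ≤ pos γ) :
      lrel q (ce (e γ) * ce (e β)) ((-((q : ℂ) ^ ip β γ)) • (ce (e β) * ce (e γ)))
  | ff (β γ : PosRoot) (h : pos β ≤ pos γ) :
      lrel q (ce (f γ) * ce (f β)) ((-((q : ℂ) ^ (-ip β γ))) • (ce (f β) * ce (f γ)))
  | ef (β γ : PosRoot) (h : β ≠ γ ∨ (β = a12 ∧ γ = a12)) :
      lrel q (ce (e γ) * ce (f β)) ((-((q : ℂ) ^ ip β γ)) • (ce (f β) * ce (e γ)))
  | ef1 :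
      lrel q (ce (e a1) * ce (f a1))
        ((-((q : ℂ) ^ (2 : ℤ))) • (ce (f a1) * ce (e a1))
          - ((q : ℂ) - (q : ℂ)⁻¹) • (ce (f a12) * ce (e a12)))
  | ef2 :
      lrel q (ce (e a2) * ce (f a2))
        ((-((q : ℂ) ^ (2 : ℤ))) • (ce (f a2) * ce (e a2))
          + ((q : ℂ) - (q : ℂ)⁻¹) • (ce (f a12) * ce (e a12)))

/-- The quantum exterior algebra `Λ`. -/
abbrev Lam (q : ℝ) := RingQuot (lrel q)

/-- The generators of `Λ`. -/
def gen (q : ℝ) (x : LGen) : Lam q := RingQuot.mkAlgHom ℂ (lrel q) (ce x)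

/-- The positive roots listed in the convex order. -/
def rootList : List PosRoot := [a2, a12, a1]

/-- The ordered monomial `e_{γ₁}⋯e_{γ_a}` over the roots in `s`, in increasing convex order. -/
def emon (q : ℝ) (s : Finset PosRoot) : Lam q :=
  ((rootList.filter fun γ => decide (γ ∈ s)).map fun γ => gen q (e γ)).prod

/-- The ordered monomial `f_{δ₁}⋯f_{δ_b}` over the roots in `s`, in increasing convex order. -/
def fmon (q : ℝ) (s : Finset PosRoot) : Lam q :=
  ((rootList.filter fun γ => decide (γ ∈ s)).map fun γ => gen q (f γ)).prod

/-- The PBW monomial `f_{δ₁}⋯f_{δ_b} e_{γ₁}⋯e_{γ_a}`. -/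
def mon (q : ℝ) (p : Finset PosRoot × Finset PosRoot) : Lam q :=
  fmon q p.1 * emon q p.2

end QFlagExt

namespace QFlagExt

open PosRoot LGen

/-- The unital subalgebra `Λ_e` generated by the `e_γ`. -/
def LamE (q : ℝ) : Subalgebra ℂ (Lam q) :=
  Algebra.adjoin ℂ (Set.range fun γ : PosRoot => gen q (e γ))

/-- The unital subalgebra `Λ_f` generated by the `f_γ`. -/
def LamF (q : ℝ) : Subalgebra ℂ (Lam q) :=
  Algebra.adjoin ℂ (Set.range fun γ : PosRoot => gen q (f γ))


open PosRoot LGen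

/-- Index for set of positive roots: presence of a2, a12, a1. -/
abbrev B3 := Bool × Bool × Bool

/-- The 8-dimensional representation space. -/
abbrev V := B3 → ℂ

/-- Wedge with the lowest root. -/
def T2 : Module.End ℂ V where
  toFun v := fun p => if p.1 then v (false, p.2.1, p.2.2) else 0
  map_add' u v := by funext p; by_cases h : p.1 <;> simp [h]
  map_smul' c v := by funext p; by_cases h : p.1 <;> simp [h]

/-- Wedge with the middle root. -/
def T12 (r : ℂ) : Module.End ℂ V where
  toFun v := fun p => if p.2.1 then (cond p.1 (-r) 1) * v (p.1, false, p.2.2) else 0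
  map_add' u v := by funext p; by_cases h : p.2.1 <;> simp [h, mul_add]
  map_smul' c v := by funext p; by_cases h : p.2.1 <;> simp [h]; ring

/-- Wedge with the highest root. -/
def T1 (r : ℂ) : Module.End ℂ V where
  toFun v := fun p =>
    if p.2.2 then (cond p.1 (-r⁻¹) 1) * (cond p.2.1 (-r) 1) * v (p.1, p.2.1, false) else 0
  map_add' u v := by funext p; by_cases h : p.2.2 <;> simp [h, mul_add]
  map_smul' c v := by funext p; by_cases h : p.2.2 <;> simp [h]; ring

def Lop (r : ℂ) : PosRoot → Module.End ℂ V
  | a2 => T2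
  | a12 => T12 r
  | a1 => T1 r

set_option maxHeartbeats 1000000 in
lemma Lop_swap (r : ℂ) (hr : r ≠ 0) (β γ : PosRoot) (h : pos β ≤ pos γ) :
    Lop r γ * Lop r β = (-(r ^ ip β γ)) • (Lop r β * Lop r γ) := by
  clear hr
  cases β <;> cases γ
  case a1.a2 => simp [pos] at h
  case a1.a12 => simp [pos] at h
  case a12.a2 => simp [pos] at h
  all_goals clear h
  all_goals
    ext v p
    obtain ⟨x, y, z⟩ := p
    cases x <;> cases y <;> cases z <;>
      simp [Lop, T2, T12, T1, ip, Module.End.mul_apply, LinearMap.smul_apply] <;> ring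

def FE (q : ℝ) : LGen → Module.End ℂ V
  | LGen.e γ => Lop (q : ℂ) γ
  | LGen.f _ => 0

def FF (q : ℝ) : LGen → Module.End ℂ V
  | LGen.e _ => 0
  | LGen.f γ => Lop ((q : ℂ)⁻¹) γ

lemma relE (q : ℝ) (hq : (q : ℂ) ≠ 0) : ∀ ⦃a b⦄, lrel q a b →
    FreeAlgebra.lift ℂ (FE q) a = FreeAlgebra.lift ℂ (FE q) b := by
  intro a b h
  induction h with
  | ee β γ h =>
      simp only [map_mul, map_smul, ce, FreeAlgebra.lift_ι_apply, FE]
      exact Lop_swap _ hq β γ h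
  | ff β γ h => simp [ce, FE]
  | ef β γ h => simp [ce, FE]
  | ef1 => simp [ce, FE]
  | ef2 => simp [ce, FE]

lemma relF (q : ℝ) (hq : (q : ℂ) ≠ 0) : ∀ ⦃a b⦄, lrel q a b →
    FreeAlgebra.lift ℂ (FF q) a = FreeAlgebra.lift ℂ (FF q) b := by
  intro a b h
  induction h with
  | ee β γ h => simp [ce, FF]
  | ff β γ h =>
      simp only [map_mul, map_smul, ce, FreeAlgebra.lift_ι_apply, FF]
      have : -((q : ℂ) ^ (-ip β γ)) = -(((q : ℂ)⁻¹) ^ (ip β γ)) := by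
        rw [zpow_neg, inv_zpow]
      rw [this]
      exact Lop_swap _ (inv_ne_zero hq) β γ h
  | ef β γ h => simp [ce, FF]
  | ef1 => simp [ce, FF]
  | ef2 => simp [ce, FF]

def PhiE (q : ℝ) (hq : (q : ℂ) ≠ 0) : Lam q →ₐ[ℂ] Module.End ℂ V :=
  RingQuot.liftAlgHom ℂ ⟨FreeAlgebra.lift ℂ (FE q), relE q hq⟩

def PhiF (q : ℝ) (hq : (q : ℂ) ≠ 0) : Lam q →ₐ[ℂ] Module.End ℂ V :=
  RingQuot.liftAlgHom ℂ ⟨FreeAlgebra.lift ℂ (FF q), relF q hq⟩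

lemma PhiE_gen (q : ℝ) (hq : (q : ℂ) ≠ 0) (x : LGen) :
    PhiE q hq (gen q x) = FE q x := by
  rw [gen, PhiE, RingQuot.liftAlgHom_mkAlgHom_apply]
  simp [ce]

lemma PhiF_gen (q : ℝ) (hq : (q : ℂ) ≠ 0) (x : LGen) :
    PhiF q hq (gen q x) = FF q x := by
  rw [gen, PhiF, RingQuot.liftAlgHom_mkAlgHom_apply]
  simp [ce]

/-- Characteristic vector of a finset of roots. -/
def chi (s : Finset PosRoot) : B3 := (decide (a2 ∈ s), decide (a12 ∈ s), decide (a1 ∈ s))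

lemma chi_inj : Function.Injective chi := by
  intro s t h
  have h2 := congrArg Prod.fst h
  have h12 := congrArg (fun p : B3 => p.2.1) h
  have h1 := congrArg (fun p : B3 => p.2.2) h
  simp only [chi, decide_eq_decide] at h2 h12 h1
  ext γ
  cases γ <;> simp [h2, h12, h1]

def d0 : V := Pi.single (false, false, false) 1

lemma PhiE_emon (q : ℝ) (hq : (q : ℂ) ≠ 0) (s : Finset PosRoot) :
    PhiE q hq (emon q s) d0 = Pi.single (chi s) 1 := by
  by_cases h2 : a2 ∈ s <;> by_cases h12 : a12 ∈ s <;> by_cases h1 : a1 ∈ s <;>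
    simp only [emon, rootList, chi, List.filter, h2, h12, h1, decide_true, decide_false,
      List.map, List.prod_cons, List.prod_nil, map_mul, map_one, PhiE_gen, mul_one] <;>
    (try simp only [FE]) <;>
    funext p <;> obtain ⟨x, y, z⟩ := p <;>
    cases x <;> cases y <;> cases z <;>
      simp [Lop, T2, T12, T1, d0, Pi.single_apply, Module.End.mul_apply, Module.End.one_apply]

lemma PhiF_fmon (q : ℝ) (hq : (q : ℂ) ≠ 0) (s : Finset PosRoot) :
    PhiF q hq (fmon q s) d0 = Pi.single (chi s) 1 := by
  by_cases h2 : a2 ∈ s <;> by_cases h12 : a12 ∈ s <;> by_cases h1 : a1 ∈ s <;>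
    simp only [fmon, rootList, chi, List.filter, h2, h12, h1, decide_true, decide_false,
      List.map, List.prod_cons, List.prod_nil, map_mul, map_one, PhiF_gen, mul_one] <;>
    (try simp only [FF]) <;>
    funext p <;> obtain ⟨x, y, z⟩ := p <;>
    cases x <;> cases y <;> cases z <;>
      simp [Lop, T2, T12, T1, d0, Pi.single_apply, Module.End.mul_apply, Module.End.one_apply]

lemma indep_single : LinearIndependent ℂ (fun s : Finset PosRoot => (Pi.single (chi s) 1 : V)) := by
  have h := (Pi.basisFun ℂ B3).linearIndependent.comp chi chi_inj
  have e : (⇑(Pi.basisFun ℂ B3) ∘ chi) = fun s => (Pi.single (chi s) 1 : V) := by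
    funext s
    simp [Function.comp]
  rwa [e] at h

lemma indepE (q : ℝ) (hq : (q : ℂ) ≠ 0) : LinearIndependent ℂ (emon q) := by
  apply LinearIndependent.of_comp ((LinearMap.applyₗ d0) ∘ₗ (PhiE q hq).toLinearMap)
  have he : (⇑((LinearMap.applyₗ d0) ∘ₗ (PhiE q hq).toLinearMap)) ∘ emon q
      = fun s => (Pi.single (chi s) 1 : V) := by
    funext s
    simpa using PhiE_emon q hq s
  rw [he]
  exact indep_single

lemma indepF (q : ℝ) (hq : (q : ℂ) ≠ 0) : LinearIndependent ℂ (fmon q) := by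
  apply LinearIndependent.of_comp ((LinearMap.applyₗ d0) ∘ₗ (PhiF q hq).toLinearMap)
  have he : (⇑((LinearMap.applyₗ d0) ∘ₗ (PhiF q hq).toLinearMap)) ∘ fmon q
      = fun s => (Pi.single (chi s) 1 : V) := by
    funext s
    simpa using PhiF_fmon q hq s
  rw [he]
  exact indep_single

lemma rel_ee (q : ℝ) (β γ : PosRoot) (h : pos β ≤ pos γ) :
    gen q (e γ) * gen q (e β) = (-((q : ℂ) ^ ip β γ)) • (gen q (e β) * gen q (e γ)) := by
  have h1 := RingQuot.mkAlgHom_rel ℂ (lrel.ee (q := q) β γ h)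
  rw [map_mul, map_smul, map_mul] at h1
  simpa [gen] using h1

lemma rel_ff (q : ℝ) (β γ : PosRoot) (h : pos β ≤ pos γ) :
    gen q (f γ) * gen q (f β) = (-((q : ℂ) ^ (-ip β γ))) • (gen q (f β) * gen q (f γ)) := by
  have h1 := RingQuot.mkAlgHom_rel ℂ (lrel.ff (q := q) β γ h)
  rw [map_mul, map_smul, map_mul] at h1
  simpa [gen] using h1

lemma ip_self (γ : PosRoot) : ip γ γ = 2 := by cases γ <;> rfl

lemma sqE (q : ℝ) (hq0 : 0 < q) (γ : PosRoot) : gen q (e γ) * gen q (e γ) = 0 := by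
  have h := rel_ee q γ γ (le_refl _)
  rw [ip_self] at h
  have hc : (1 : ℂ) + (q : ℂ) ^ (2 : ℤ) ≠ 0 := by
    have e1 : (1 : ℂ) + (q : ℂ) ^ (2 : ℤ) = ((1 + q ^ 2 : ℝ) : ℂ) := by
      rw [show ((2:ℤ)) = ((2:ℕ) : ℤ) from rfl, zpow_natCast]
      push_cast
      ring
    rw [e1]
    simp only [ne_eq, Complex.ofReal_eq_zero]
    positivity
  have h2 : (1 + (q : ℂ) ^ (2 : ℤ)) • (gen q (e γ) * gen q (e γ)) = 0 := by
    rw [add_smul, one_smul]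
    nth_rewrite 1 [h]
    module
  exact (smul_eq_zero.mp h2).resolve_left hc

lemma sqF (q : ℝ) (hq0 : 0 < q) (γ : PosRoot) : gen q (f γ) * gen q (f γ) = 0 := by
  have h := rel_ff q γ γ (le_refl _)
  rw [ip_self] at h
  have hc : (1 : ℂ) + (q : ℂ) ^ (-2 : ℤ) ≠ 0 := by
    have e1 : (1 : ℂ) + (q : ℂ) ^ (-2 : ℤ) = ((1 + q ^ (-2 : ℤ) : ℝ) : ℂ) := by
      push_cast
      ring
    rw [e1]
    simp only [ne_eq, Complex.ofReal_eq_zero]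
    positivity
  have h2 : (1 + (q : ℂ) ^ (-2 : ℤ)) • (gen q (f γ) * gen q (f γ)) = 0 := by
    rw [add_smul, one_smul]
    nth_rewrite 1 [h]
    module
  exact (smul_eq_zero.mp h2).resolve_left hc

lemma Lsmul_mul (q : ℝ) (c : ℂ) (x y : Lam q) : (c • x) * y = c • (x * y) :=
  smul_mul_assoc c x y

lemma Lmul_smul (q : ℝ) (c : ℂ) (x y : Lam q) : x * (c • y) = c • (x * y) :=
  mul_smul_comm c x y

lemma Lsmul_smul (q : ℝ) (c d : ℂ) (x : Lam q) : c • (d • x) = (c * d) • x :=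
  smul_smul c d x

lemma Lsmul_zero (q : ℝ) (c : ℂ) : c • (0 : Lam q) = 0 := smul_zero c

lemma smulmemE (q : ℝ) (c : ℂ) {x : Lam q} {N : Submodule ℂ (Lam q)} (hx : x ∈ N) :
    c • x ∈ N := Submodule.smul_mem N c hx

lemma swE12 (q : ℝ) : gen q (e a12) * gen q (e a2)
    = (-((q : ℂ) ^ ip a2 a12)) • (gen q (e a2) * gen q (e a12)) :=
  rel_ee q a2 a12 (by decide)

lemma swE1_2 (q : ℝ) : gen q (e a1) * gen q (e a2)
    = (-((q : ℂ) ^ ip a2 a1)) • (gen q (e a2) * gen q (e a1)) :=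
  rel_ee q a2 a1 (by decide)

lemma swE1_12 (q : ℝ) : gen q (e a1) * gen q (e a12)
    = (-((q : ℂ) ^ ip a12 a1)) • (gen q (e a12) * gen q (e a1)) :=
  rel_ee q a12 a1 (by decide)

lemma swE12' (q : ℝ) (x : Lam q) : gen q (e a12) * (gen q (e a2) * x)
    = (-((q : ℂ) ^ ip a2 a12)) • (gen q (e a2) * (gen q (e a12) * x)) := by
  rw [← mul_assoc, swE12, Lsmul_mul, mul_assoc]

lemma swE1_2' (q : ℝ) (x : Lam q) : gen q (e a1) * (gen q (e a2) * x)
    = (-((q : ℂ) ^ ip a2 a1)) • (gen q (e a2) * (gen q (e a1) * x)) := by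
  rw [← mul_assoc, swE1_2, Lsmul_mul, mul_assoc]

lemma swE1_12' (q : ℝ) (x : Lam q) : gen q (e a1) * (gen q (e a12) * x)
    = (-((q : ℂ) ^ ip a12 a1)) • (gen q (e a12) * (gen q (e a1) * x)) := by
  rw [← mul_assoc, swE1_12, Lsmul_mul, mul_assoc]

lemma sqE' (q : ℝ) (hq0 : 0 < q) (γ : PosRoot) (x : Lam q) :
    gen q (e γ) * (gen q (e γ) * x) = 0 := by
  rw [← mul_assoc, sqE q hq0, zero_mul]

lemma memE (q : ℝ) (s : Finset PosRoot) :
    emon q s ∈ Submodule.span ℂ (Set.range (emon q)) :=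
  Submodule.subset_span ⟨s, rfl⟩

lemma nfE0 (q : ℝ) : (1 : Lam q) ∈ Submodule.span ℂ (Set.range (emon q)) := by
  have h := memE q ∅
  rwa [show emon q (∅ : Finset PosRoot) = 1 from by simp [emon, rootList]] at h

lemma nfE2 (q : ℝ) : gen q (e a2) ∈ Submodule.span ℂ (Set.range (emon q)) := by
  have h := memE q {a2}
  rwa [show emon q {a2} = gen q (e a2) from by simp [emon, rootList]] at h

lemma nfE12 (q : ℝ) : gen q (e a12) ∈ Submodule.span ℂ (Set.range (emon q)) := by
  have h := memE q {a12}
  rwa [show emon q {a12} = gen q (e a12) from by simp [emon, rootList]] at h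

lemma nfE1 (q : ℝ) : gen q (e a1) ∈ Submodule.span ℂ (Set.range (emon q)) := by
  have h := memE q {a1}
  rwa [show emon q {a1} = gen q (e a1) from by simp [emon, rootList]] at h

lemma nfE2_12 (q : ℝ) : gen q (e a2) * gen q (e a12) ∈ Submodule.span ℂ (Set.range (emon q)) := by
  have h := memE q {a2, a12}
  rwa [show emon q {a2, a12} = gen q (e a2) * gen q (e a12) from by simp [emon, rootList]] at h

lemma nfE2_1 (q : ℝ) : gen q (e a2) * gen q (e a1) ∈ Submodule.span ℂ (Set.range (emon q)) := by
  have h := memE q {a2, a1}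
  rwa [show emon q {a2, a1} = gen q (e a2) * gen q (e a1) from by simp [emon, rootList]] at h

lemma nfE12_1 (q : ℝ) : gen q (e a12) * gen q (e a1) ∈ Submodule.span ℂ (Set.range (emon q)) := by
  have h := memE q {a12, a1}
  rwa [show emon q {a12, a1} = gen q (e a12) * gen q (e a1) from by simp [emon, rootList]] at h

lemma nfEall (q : ℝ) : gen q (e a2) * (gen q (e a12) * gen q (e a1))
    ∈ Submodule.span ℂ (Set.range (emon q)) := by
  have h := memE q {a2, a12, a1}
  rwa [show emon q {a2, a12, a1} = gen q (e a2) * (gen q (e a12) * gen q (e a1)) from by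
    simp [emon, rootList, mul_assoc]] at h

lemma stepE (q : ℝ) (hq0 : 0 < q) (γ : PosRoot) (s : Finset PosRoot) :
    gen q (e γ) * emon q s ∈ Submodule.span ℂ (Set.range (emon q)) := by
  by_cases h2 : a2 ∈ s <;> by_cases h12 : a12 ∈ s <;> by_cases h1 : a1 ∈ s <;> cases γ <;>
    simp only [emon, rootList, List.filter, h2, h12, h1, decide_true, decide_false,
      List.map, List.prod_cons, List.prod_nil, mul_one, one_mul,
      sqE q hq0, sqE' q hq0, swE12 q, swE12' q, swE1_2 q, swE1_2' q, swE1_12 q, swE1_12' q,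
      Lsmul_mul, Lmul_smul, Lsmul_smul, Lsmul_zero, mul_zero, zero_mul] <;>
    first
      | exact Submodule.zero_mem _
      | exact nfE0 q
      | exact nfE2 q
      | exact nfE12 q
      | exact nfE1 q
      | exact nfE2_12 q
      | exact nfE2_1 q
      | exact nfE12_1 q
      | exact nfEall q
      | exact smulmemE q _ (nfE0 q)
      | exact smulmemE q _ (nfE2 q)
      | exact smulmemE q _ (nfE12 q)
      | exact smulmemE q _ (nfE1 q)
      | exact smulmemE q _ (nfE2_12 q)
      | exact smulmemE q _ (nfE2_1 q)
      | exact smulmemE q _ (nfE12_1 q)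
      | exact smulmemE q _ (nfEall q)

lemma genmulE (q : ℝ) (hq0 : 0 < q) (γ : PosRoot) {x : Lam q}
    (hx : x ∈ Submodule.span ℂ (Set.range (emon q))) :
    gen q (e γ) * x ∈ Submodule.span ℂ (Set.range (emon q)) := by
  induction hx using Submodule.span_induction with
  | mem y hy =>
      obtain ⟨s, rfl⟩ := hy
      exact stepE q hq0 γ s
  | zero => simpa [mul_zero] using Submodule.zero_mem _
  | add y z hy hz ihy ihz => simpa [mul_add] using Submodule.add_mem _ ihy ihz
  | smul c y hy ihy =>
      rw [Lmul_smul]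
      exact smulmemE q c ihy

lemma listmulE (q : ℝ) (hq0 : 0 < q) (l : List PosRoot) {x : Lam q}
    (hx : x ∈ Submodule.span ℂ (Set.range (emon q))) :
    ((l.map fun γ => gen q (e γ)).prod) * x ∈ Submodule.span ℂ (Set.range (emon q)) := by
  induction l with
  | nil => simpa using hx
  | cons γ l ih =>
      rw [List.map_cons, List.prod_cons, mul_assoc]
      exact genmulE q hq0 γ ih

lemma mulmemE (q : ℝ) (hq0 : 0 < q) {x y : Lam q}
    (hx : x ∈ Submodule.span ℂ (Set.range (emon q)))
    (hy : y ∈ Submodule.span ℂ (Set.range (emon q))) :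
    x * y ∈ Submodule.span ℂ (Set.range (emon q)) := by
  induction hx using Submodule.span_induction with
  | mem z hz =>
      obtain ⟨s, rfl⟩ := hz
      exact listmulE q hq0 _ hy
  | zero => simpa [zero_mul] using Submodule.zero_mem _
  | add z w hz hw ihz ihw => simpa [add_mul] using Submodule.add_mem _ ihz ihw
  | smul c z hz ihz =>
      rw [Lsmul_mul]
      exact smulmemE q c ihz

lemma spanE_eq (q : ℝ) (hq0 : 0 < q) :
    Subalgebra.toSubmodule (LamE q) = Submodule.span ℂ (Set.range (emon q)) := by
  apply le_antisymm
  · intro x hx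
    have hle : LamE q ≤
        (Submodule.span ℂ (Set.range (emon q))).toSubalgebra (nfE0 q)
          (fun a b ha hb => mulmemE q hq0 ha hb) := by
      apply Algebra.adjoin_le
      rintro _ ⟨γ, rfl⟩
      show gen q (e γ) ∈ Submodule.span ℂ (Set.range (emon q))
      cases γ
      · exact nfE1 q
      · exact nfE2 q
      · exact nfE12 q
    exact hle hx
  · rw [Submodule.span_le]
    rintro _ ⟨s, rfl⟩
    show emon q s ∈ LamE q
    rw [emon]
    apply Subalgebra.list_prod_mem
    intro x hx
    obtain ⟨γ, _, rfl⟩ := List.mem_map.mp hx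
    exact Algebra.subset_adjoin ⟨γ, rfl⟩

lemma swF12 (q : ℝ) : gen q (f a12) * gen q (f a2)
    = (-((q : ℂ) ^ (-ip a2 a12))) • (gen q (f a2) * gen q (f a12)) :=
  rel_ff q a2 a12 (by decide)

lemma swF1_2 (q : ℝ) : gen q (f a1) * gen q (f a2)
    = (-((q : ℂ) ^ (-ip a2 a1))) • (gen q (f a2) * gen q (f a1)) :=
  rel_ff q a2 a1 (by decide)

lemma swF1_12 (q : ℝ) : gen q (f a1) * gen q (f a12)
    = (-((q : ℂ) ^ (-ip a12 a1))) • (gen q (f a12) * gen q (f a1)) :=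
  rel_ff q a12 a1 (by decide)

lemma swF12' (q : ℝ) (x : Lam q) : gen q (f a12) * (gen q (f a2) * x)
    = (-((q : ℂ) ^ (-ip a2 a12))) • (gen q (f a2) * (gen q (f a12) * x)) := by
  rw [← mul_assoc, swF12, Lsmul_mul, mul_assoc]

lemma swF1_2' (q : ℝ) (x : Lam q) : gen q (f a1) * (gen q (f a2) * x)
    = (-((q : ℂ) ^ (-ip a2 a1))) • (gen q (f a2) * (gen q (f a1) * x)) := by
  rw [← mul_assoc, swF1_2, Lsmul_mul, mul_assoc]

lemma swF1_12' (q : ℝ) (x : Lam q) : gen q (f a1) * (gen q (f a12) * x)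
    = (-((q : ℂ) ^ (-ip a12 a1))) • (gen q (f a12) * (gen q (f a1) * x)) := by
  rw [← mul_assoc, swF1_12, Lsmul_mul, mul_assoc]

lemma sqF' (q : ℝ) (hq0 : 0 < q) (γ : PosRoot) (x : Lam q) :
    gen q (f γ) * (gen q (f γ) * x) = 0 := by
  rw [← mul_assoc, sqF q hq0, zero_mul]

lemma memF (q : ℝ) (s : Finset PosRoot) :
    fmon q s ∈ Submodule.span ℂ (Set.range (fmon q)) :=
  Submodule.subset_span ⟨s, rfl⟩

lemma nfF0 (q : ℝ) : (1 : Lam q) ∈ Submodule.span ℂ (Set.range (fmon q)) := by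
  have h := memF q ∅
  rwa [show fmon q (∅ : Finset PosRoot) = 1 from by simp [fmon, rootList]] at h

lemma nfF2 (q : ℝ) : gen q (f a2) ∈ Submodule.span ℂ (Set.range (fmon q)) := by
  have h := memF q {a2}
  rwa [show fmon q {a2} = gen q (f a2) from by simp [fmon, rootList]] at h

lemma nfF12 (q : ℝ) : gen q (f a12) ∈ Submodule.span ℂ (Set.range (fmon q)) := by
  have h := memF q {a12}
  rwa [show fmon q {a12} = gen q (f a12) from by simp [fmon, rootList]] at h

lemma nfF1 (q : ℝ) : gen q (f a1) ∈ Submodule.span ℂ (Set.range (fmon q)) := by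
  have h := memF q {a1}
  rwa [show fmon q {a1} = gen q (f a1) from by simp [fmon, rootList]] at h

lemma nfF2_12 (q : ℝ) : gen q (f a2) * gen q (f a12) ∈ Submodule.span ℂ (Set.range (fmon q)) := by
  have h := memF q {a2, a12}
  rwa [show fmon q {a2, a12} = gen q (f a2) * gen q (f a12) from by simp [fmon, rootList]] at h

lemma nfF2_1 (q : ℝ) : gen q (f a2) * gen q (f a1) ∈ Submodule.span ℂ (Set.range (fmon q)) := by
  have h := memF q {a2, a1}
  rwa [show fmon q {a2, a1} = gen q (f a2) * gen q (f a1) from by simp [fmon, rootList]] at h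

lemma nfF12_1 (q : ℝ) : gen q (f a12) * gen q (f a1) ∈ Submodule.span ℂ (Set.range (fmon q)) := by
  have h := memF q {a12, a1}
  rwa [show fmon q {a12, a1} = gen q (f a12) * gen q (f a1) from by simp [fmon, rootList]] at h

lemma nfFall (q : ℝ) : gen q (f a2) * (gen q (f a12) * gen q (f a1))
    ∈ Submodule.span ℂ (Set.range (fmon q)) := by
  have h := memF q {a2, a12, a1}
  rwa [show fmon q {a2, a12, a1} = gen q (f a2) * (gen q (f a12) * gen q (f a1)) from by
    simp [fmon, rootList, mul_assoc]] at h

lemma stepF (q : ℝ) (hq0 : 0 < q) (γ : PosRoot) (s : Finset PosRoot) :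
    gen q (f γ) * fmon q s ∈ Submodule.span ℂ (Set.range (fmon q)) := by
  by_cases h2 : a2 ∈ s <;> by_cases h12 : a12 ∈ s <;> by_cases h1 : a1 ∈ s <;> cases γ <;>
    simp only [fmon, rootList, List.filter, h2, h12, h1, decide_true, decide_false,
      List.map, List.prod_cons, List.prod_nil, mul_one, one_mul,
      sqF q hq0, sqF' q hq0, swF12 q, swF12' q, swF1_2 q, swF1_2' q, swF1_12 q, swF1_12' q,
      Lsmul_mul, Lmul_smul, Lsmul_smul, Lsmul_zero, mul_zero, zero_mul] <;>
    first
      | exact Submodule.zero_mem _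
      | exact nfF0 q
      | exact nfF2 q
      | exact nfF12 q
      | exact nfF1 q
      | exact nfF2_12 q
      | exact nfF2_1 q
      | exact nfF12_1 q
      | exact nfFall q
      | exact smulmemE q _ (nfF0 q)
      | exact smulmemE q _ (nfF2 q)
      | exact smulmemE q _ (nfF12 q)
      | exact smulmemE q _ (nfF1 q)
      | exact smulmemE q _ (nfF2_12 q)
      | exact smulmemE q _ (nfF2_1 q)
      | exact smulmemE q _ (nfF12_1 q)
      | exact smulmemE q _ (nfFall q)

lemma genmulF (q : ℝ) (hq0 : 0 < q) (γ : PosRoot) {x : Lam q}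
    (hx : x ∈ Submodule.span ℂ (Set.range (fmon q))) :
    gen q (f γ) * x ∈ Submodule.span ℂ (Set.range (fmon q)) := by
  induction hx using Submodule.span_induction with
  | mem y hy =>
      obtain ⟨s, rfl⟩ := hy
      exact stepF q hq0 γ s
  | zero => simp [mul_zero]
  | add y z hy hz ihy ihz => simpa [mul_add] using Submodule.add_mem _ ihy ihz
  | smul c y hy ihy =>
      rw [Lmul_smul]
      exact smulmemE q c ihy

lemma listmulF (q : ℝ) (hq0 : 0 < q) (l : List PosRoot) {x : Lam q}
    (hx : x ∈ Submodule.span ℂ (Set.range (fmon q))) :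
    ((l.map fun γ => gen q (f γ)).prod) * x ∈ Submodule.span ℂ (Set.range (fmon q)) := by
  induction l with
  | nil => simpa using hx
  | cons γ l ih =>
      rw [List.map_cons, List.prod_cons, mul_assoc]
      exact genmulF q hq0 γ ih

lemma mulmemF (q : ℝ) (hq0 : 0 < q) {x y : Lam q}
    (hx : x ∈ Submodule.span ℂ (Set.range (fmon q)))
    (hy : y ∈ Submodule.span ℂ (Set.range (fmon q))) :
    x * y ∈ Submodule.span ℂ (Set.range (fmon q)) := by
  induction hx using Submodule.span_induction with
  | mem z hz =>
      obtain ⟨s, rfl⟩ := hz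
      exact listmulF q hq0 _ hy
  | zero => simp [zero_mul]
  | add z w hz hw ihz ihw => simpa [add_mul] using Submodule.add_mem _ ihz ihw
  | smul c z hz ihz =>
      rw [Lsmul_mul]
      exact smulmemE q c ihz

lemma spanF_eq (q : ℝ) (hq0 : 0 < q) :
    Subalgebra.toSubmodule (LamF q) = Submodule.span ℂ (Set.range (fmon q)) := by
  apply le_antisymm
  · intro x hx
    have hle : LamF q ≤
        (Submodule.span ℂ (Set.range (fmon q))).toSubalgebra (nfF0 q)
          (fun a b ha hb => mulmemF q hq0 ha hb) := by
      apply Algebra.adjoin_le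
      rintro _ ⟨γ, rfl⟩
      show gen q (f γ) ∈ Submodule.span ℂ (Set.range (fmon q))
      cases γ
      · exact nfF1 q
      · exact nfF2 q
      · exact nfF12 q
    exact hle hx
  · rw [Submodule.span_le]
    rintro _ ⟨s, rfl⟩
    show fmon q s ∈ LamF q
    rw [fmon]
    apply Subalgebra.list_prod_mem
    intro x hx
    obtain ⟨γ, _, rfl⟩ := List.mem_map.mp hx
    exact Algebra.subset_adjoin ⟨γ, rfl⟩

lemma card8 : Fintype.card (Finset PosRoot) = 8 := by
  simp [Fintype.card_finset]
  rfl

theorem holomorphic_subalgebras_classical_dimension (q : ℝ) (hq0 : 0 < q) (hq1 : q < 1) :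
    (LinearIndependent ℂ (emon q)
      ∧ Subalgebra.toSubmodule (LamE q) = Submodule.span ℂ (Set.range (emon q))
      ∧ Module.finrank ℂ (LamE q) = 8)
    ∧ (LinearIndependent ℂ (fmon q)
      ∧ Subalgebra.toSubmodule (LamF q) = Submodule.span ℂ (Set.range (fmon q))
      ∧ Module.finrank ℂ (LamF q) = 8) := by
  have hq : (q : ℂ) ≠ 0 := Complex.ofReal_ne_zero.mpr (ne_of_gt hq0)
  have hE := indepE q hq
  have hF := indepF q hq
  refine ⟨⟨hE, spanE_eq q hq0, ?_⟩, ⟨hF, spanF_eq q hq0, ?_⟩⟩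
  · rw [← Subalgebra.finrank_toSubmodule, spanE_eq q hq0]
    rw [finrank_span_eq_card hE, card8]
  · rw [← Subalgebra.finrank_toSubmodule, spanF_eq q hq0]
    rw [finrank_span_eq_card hF, card8]

end QFlagExt
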